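/- If the propensity score is linear, e(x) = a₀ + a₁ᵀx, with a₀, a₁ as in the previous lemma (a₁ = [p(1−p)/(1+p(1−p)c)]A⁻¹(μ_t − μ_c), a₀ = p − a₁ᵀμ), then E[e(X)(1 − e(X))] = p(1−p)/(1 + p(1−p)c). -/

import Mathlib

open MeasureTheory Matrix

section Aux
variable {k : ℕ}

lemma vecMulVec_mulVec_aux (u v w : Fin k → ℝ) :
    (vecMulVec u v) *ᵥ w = (v ⬝ᵥ w) • u := by
  ext i
  simp [vecMulVec, mulVec, dotProduct, Finset.mul_sum, mul_comm, mul_left_comm]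

end Aux

theorem expectation_propensity_variance {k : ℕ}
    {Ω : Type*} [MeasurableSpace Ω] (μ : Measure Ω) [IsProbabilityMeasure μ]
    (X : Ω → Fin k → ℝ) (hX : Measurable X) (hX2 : MemLp X 2 μ)
    (p : ℝ) (hp0 : 0 < p) (hp1 : p < 1)
    (μt μc μall : Fin k → ℝ) (hμall : μall = ∫ ω, X ω ∂μ)
    (A Sig : Matrix (Fin k) (Fin k) ℝ) (hApd : A.PosDef)
    (hSig : ∀ i j, Sig i j = ∫ ω, (X ω i - μall i) * (X ω j - μall j) ∂μ)
    (hdecomp : Sig = A + (p * (1 - p)) • vecMulVec (μt - μc) (μt - μc))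
    (c : ℝ) (hc : c = (μt - μc) ⬝ᵥ A⁻¹.mulVec (μt - μc))
    (a0 : ℝ) (a1 : Fin k → ℝ)
    (ha1 : a1 = (p * (1 - p) / (1 + p * (1 - p) * c)) • A⁻¹.mulVec (μt - μc))
    (ha0 : a0 = p - a1 ⬝ᵥ μall)
    (e : Ω → ℝ) (he : ∀ ω, e ω = a0 + a1 ⬝ᵥ X ω) :
    ∫ ω, e ω * (1 - e ω) ∂μ = p * (1 - p) / (1 + p * (1 - p) * c) := by
  set s : ℝ := p * (1 - p) with hs
  have hs0 : 0 < s := mul_pos hp0 (by linarith)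
  -- c ≥ 0
  have hc0 : 0 ≤ c := by
    rw [hc]
    have := hApd.inv.posSemidef.re_dotProduct_nonneg (μt - μc)
    simpa using this
  have hden : 0 < 1 + s * c := by positivity
  have hdet : IsUnit A.det := isUnit_iff_ne_zero.mpr (ne_of_gt hApd.det_pos)
  set m : Fin k → ℝ := μt - μc with hm
  set w : Fin k → ℝ := A⁻¹.mulVec m with hw
  have hAw : A *ᵥ w = m := by
    rw [hw, mulVec_mulVec, Matrix.mul_nonsing_inv A hdet, one_mulVec]
  -- quadratic form value
  have hquad : a1 ⬝ᵥ Sig *ᵥ a1 = s ^ 2 * c / (1 + s * c) := by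
    have hwAw : w ⬝ᵥ A *ᵥ w = c := by rw [hAw, dotProduct_comm, hc]
    have hwm : m ⬝ᵥ w = c := hc.symm
    have hwv : w ⬝ᵥ (vecMulVec m m) *ᵥ w = c * c := by
      rw [vecMulVec_mulVec_aux, dotProduct_smul, hwm, smul_eq_mul,
        dotProduct_comm, hwm]
    rw [ha1, hdecomp]
    rw [smul_dotProduct, mulVec_smul, dotProduct_smul, smul_eq_mul, smul_eq_mul]
    rw [add_mulVec, smul_mulVec, dotProduct_add, dotProduct_smul, smul_eq_mul,
      hwAw, hwv]
    field_simp
  -- measure-theoretic part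
  have hXint : Integrable X μ := hX2.integrable one_le_two
  have hXi2 : ∀ i, MemLp (fun ω => X ω i) 2 μ := by
    intro i
    exact (ContinuousLinearMap.proj (R := ℝ) (φ := fun _ : Fin k => ℝ) i).comp_memLp' hX2
  have hYi2 : ∀ i, MemLp (fun ω => X ω i - μall i) 2 μ := fun i =>
    (hXi2 i).sub (memLp_const _)
  have hYint : ∀ i, Integrable (fun ω => X ω i - μall i) μ := fun i =>
    (hYi2 i).integrable one_le_two
  have hprod : ∀ i j, Integrable (fun ω => (X ω i - μall i) * (X ω j - μall j)) μ := by
    intro i j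
    have := ((hYi2 j).smul (hYi2 i) (r := 1) :
      MemLp ((fun ω => X ω i - μall i) • (fun ω => X ω j - μall j)) 1 μ)
    exact memLp_one_iff_integrable.mp this
  have hEXi : ∀ i, ∫ ω, X ω i ∂μ = μall i := by
    intro i
    have := (ContinuousLinearMap.proj (R := ℝ) (φ := fun _ : Fin k => ℝ) i).integral_comp_comm hXint
    simpa [← hμall] using this
  have hEYi : ∀ i, ∫ ω, (X ω i - μall i) ∂μ = 0 := by
    intro i
    rw [integral_sub ((hXi2 i).integrable one_le_two) (integrable_const _)]
    rw [hEXi i]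
    simp
  set d : Ω → ℝ := fun ω => ∑ i, a1 i * (X ω i - μall i) with hd
  have hed : ∀ ω, e ω = p + d ω := by
    intro ω
    rw [he, ha0, hd]
    simp only [dotProduct, mul_sub]
    rw [Finset.sum_sub_distrib]
    ring
  have hdint : Integrable d μ :=
    integrable_finset_sum _ (fun i _ => (hYint i).const_mul _)
  have hsq : ∀ ω, d ω * d ω =
      ∑ i, ∑ j, (a1 i * a1 j) * ((X ω i - μall i) * (X ω j - μall j)) := by
    intro ω
    rw [hd, Finset.sum_mul_sum]
    exact Finset.sum_congr rfl fun i _ => Finset.sum_congr rfl fun j _ => by ring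
  have hd2int : Integrable (fun ω => d ω * d ω) μ := by
    simp only [hsq]
    exact integrable_finset_sum _ fun i _ =>
      integrable_finset_sum _ fun j _ => (hprod i j).const_mul _
  have hEd : ∫ ω, d ω ∂μ = 0 := by
    rw [show (fun ω => d ω) = fun ω => ∑ i, a1 i * (X ω i - μall i) from rfl]
    rw [integral_finset_sum _ (fun i _ => (hYint i).const_mul _)]
    simp only [integral_const_mul, hEYi, mul_zero, Finset.sum_const_zero]
  have hEd2 : ∫ ω, d ω * d ω ∂μ = a1 ⬝ᵥ Sig *ᵥ a1 := by
    simp only [hsq]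
    rw [integral_finset_sum _ (fun i _ =>
      integrable_finset_sum _ fun j _ => (hprod i j).const_mul _)]
    have : ∀ i, ∫ ω, (∑ j, (a1 i * a1 j) * ((X ω i - μall i) * (X ω j - μall j))) ∂μ
        = ∑ j, (a1 i * a1 j) * Sig i j := by
      intro i
      rw [integral_finset_sum _ (fun j _ => (hprod i j).const_mul _)]
      exact Finset.sum_congr rfl fun j _ => by rw [integral_const_mul, hSig i j]
    simp only [this]
    simp only [dotProduct, mulVec, Finset.mul_sum]
    exact Finset.sum_congr rfl fun i _ => Finset.sum_congr rfl fun j _ => by ring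
  have hrw : ∀ ω, e ω * (1 - e ω) = s + ((1 - 2*p) * d ω - d ω * d ω) := by
    intro ω
    rw [hed]
    ring
  rw [integral_congr_ae (Filter.Eventually.of_forall hrw)]
  have h1 : Integrable (fun ω => (1 - 2*p) * d ω - d ω * d ω) μ := by
    exact (hdint.const_mul _).sub hd2int
  have h2 : Integrable (fun ω => (1 - 2*p) * d ω) μ := hdint.const_mul _
  have h3 : ∫ a, (1 - 2*p) * d a ∂μ = 0 := by
    rw [integral_const_mul, hEd, mul_zero]
  rw [integral_add (integrable_const _) h1, integral_sub h2 hd2int,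
    integral_const, h3, hEd2, hquad]
  simp only [probReal_univ, ENNReal.toReal_one, smul_eq_mul, one_mul, zero_sub]
  field_simp
  ring
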